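/- arXiv:2604.11633 — 3 statements merged into one kernel-verified Lean document; each statement's English description precedes it below -/
import Mathlib

section
/- Let k ≥ 0 be an integer and c > 0 with c > k+1. If z > 0 satisfies z f_k(z)/f_{k+1}(z) = c, then c − (k+1) < z < c. -/
/-- `ftail ℓ z = ∑_{j ≥ ℓ} z^j / j!`, the tail of the exponential series. -/
noncomputable def ftail (ℓ : ℕ) (z : ℝ) : ℝ := ∑' j : ℕ, z ^ (j + ℓ) / (Nat.factorial (j + ℓ))

lemma ftail_summable (ℓ : ℕ) (z : ℝ) :
    Summable fun j : ℕ => z ^ (j + ℓ) / (Nat.factorial (j + ℓ)) :=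
  (summable_nat_add_iff ℓ).2 (Real.summable_pow_div_factorial z)

lemma ftail_pos (ℓ : ℕ) {z : ℝ} (hz : 0 < z) : 0 < ftail ℓ z :=
  Summable.tsum_pos (ftail_summable ℓ z) (fun i => by positivity) 0 (by positivity)

lemma ftail_succ (ℓ : ℕ) (z : ℝ) :
    ftail ℓ z = z ^ ℓ / (Nat.factorial ℓ) + ftail (ℓ + 1) z := by
  unfold ftail
  rw [Summable.tsum_eq_zero_add (ftail_summable ℓ z)]
  simp only [zero_add]
  congr 1
  exact tsum_congr fun j => by rw [show j + 1 + ℓ = j + (ℓ + 1) by omega]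

/-- if `c > k+1` and `z > 0` satisfies `z f_k(z)/f_{k+1}(z) = c`,
then `c - (k + 1) < z < c`. -/
theorem stmt2 (k : ℕ) (c z : ℝ) (hc : (k + 1 : ℝ) < c) (hz : 0 < z)
    (h : z * ftail k z / ftail (k + 1) z = c) :
    c - (k + 1) < z ∧ z < c := by
  have h1 : 0 < ftail (k + 1) z := ftail_pos (k + 1) hz
  have h2 : 0 < ftail (k + 2) z := ftail_pos (k + 2) hz
  have heq : z * ftail k z = c * ftail (k + 1) z := by
    field_simp at h; linarith
  have hsk : ftail k z = z ^ k / (Nat.factorial k) + ftail (k + 1) z := ftail_succ k z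
  have hsk1 : ftail (k + 1) z = z ^ (k + 1) / (Nat.factorial (k + 1)) + ftail (k + 2) z :=
    ftail_succ (k + 1) z
  have hfact : (Nat.factorial (k + 1) : ℝ) = (k + 1) * Nat.factorial k := by
    rw [Nat.factorial_succ]; push_cast; ring
  have hfk : (0 : ℝ) < Nat.factorial k := by positivity
  -- z * ftail k z = z^(k+1)/k! + z * ftail (k+1) z
  have hzk : 0 < z ^ (k + 1) / (Nat.factorial k) := by positivity
  constructor
  · -- (z + k + 1 - c) * F_{k+1} = (k+1) F_{k+1} - z^{k+1}/k! > 0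
    have key : z ^ (k + 1) / (Nat.factorial k) < (k + 1) * ftail (k + 1) z := by
      rw [hsk1, hfact]
      have : ((k : ℝ) + 1) * (z ^ (k + 1) / ((k + 1) * Nat.factorial k))
          = z ^ (k + 1) / Nat.factorial k := by
        field_simp
      nlinarith [h2, (by positivity : (0:ℝ) < (k:ℝ) + 1)]
    have expand : c * ftail (k + 1) z
        = z ^ (k + 1) / Nat.factorial k + z * ftail (k + 1) z := by
      rw [← heq, hsk]; field_simp; ring
    nlinarith
  · have expand : c * ftail (k + 1) z
        = z ^ (k + 1) / Nat.factorial k + z * ftail (k + 1) z := by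
      rw [← heq, hsk]; field_simp; ring
    nlinarith
end

section
/- Let κ ≥ 3 and let φ be an even permutation of [κ] all of whose cycles have odd length. Let R_φ = {τ : τ is a cyclic permutation of [κ] and φ∘τ is also a cyclic permutation of [κ]}. Then (κ−2)! ≤ |R_φ| ≤ (κ−1)!. -/
open Equiv Equiv.Perm Finset

namespace Stmt9Aux

variable {α : Type*} [Fintype α] [DecidableEq α]

open scoped Classical in
noncomputable def fullSet (s : Finset α) (φ : Perm α) : Finset (Perm α) :=
  Finset.univ.filter fun τ => (τ.IsCycle ∧ τ.support = s) ∧ ((φ*τ).IsCycle ∧ (φ*τ).support = s)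

lemma mem_fullSet {s : Finset α} {φ τ : Perm α} :
    τ ∈ fullSet s φ ↔ (τ.IsCycle ∧ τ.support = s) ∧ ((φ*τ).IsCycle ∧ (φ*τ).support = s) := by
  simp [fullSet]

lemma no_two_cycle {τ : Perm α} {s : Finset α} (hc : τ.IsCycle) (hs : τ.support = s)
    {z : α} (hz : z ∈ s) (h3 : 3 ≤ s.card) : τ (τ z) ≠ z := by
  intro h2
  have hz' : τ z ≠ z := mem_support.mp (by rw [hs]; exact hz)
  have pows : ∀ i : ℕ, (τ ^ i) z = z ∨ (τ ^ i) z = τ z := by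
    intro i
    induction i with
    | zero => left; simp
    | succ i ih =>
      rw [pow_succ', mul_apply]
      rcases ih with h | h
      · right; rw [h]
      · left; rw [h, h2]
  have key : s ⊆ {z, τ z} := by
    intro w hw
    have hw' : τ w ≠ w := mem_support.mp (by rw [hs]; exact hw)
    obtain ⟨i, hi⟩ := hc.exists_pow_eq hz' hw'
    rcases pows i with h | h <;> rw [hi] at h <;> simp [h]
  have hle := Finset.card_le_card key
  have : ({z, τ z} : Finset α).card ≤ 2 :=
    le_trans (Finset.card_insert_le _ _) (by simp)
  omega

lemma insert_cycle {ρ : Perm α} {t : Finset α} (hc : ρ.IsCycle) (hs : ρ.support = t)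
    {z x : α} (hz : z ∉ t) (hx : x ∈ t) :
    (swap z x * ρ).IsCycle ∧ (swap z x * ρ).support = insert z t := by
  have hzx : z ≠ x := fun h => hz (h ▸ hx)
  have hρz : ρ z = z := notMem_support.mp (by rw [hs]; exact hz)
  have happ : ∀ y, y ≠ z → ρ y ≠ x → (swap z x * ρ) y = ρ y := by
    intro y hyz hyx
    have hne : ρ y ≠ z := fun h => hyz (ρ.injective (h.trans hρz.symm))
    simp [mul_apply, swap_apply_of_ne_of_ne hne hyx]
  have hσz : (swap z x * ρ) z = x := by simp [mul_apply, hρz]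
  have hsupp : (swap z x * ρ).support = insert z t := by
    ext y
    rw [mem_support]
    by_cases hyz : y = z
    · subst hyz
      simp [hσz, Ne.symm hzx]
    · by_cases hyx : ρ y = x
      · have hyt : y ∈ t := by
          by_contra hyt
          have h1 : ρ y = y := notMem_support.mp (by rw [hs]; exact hyt)
          rw [h1] at hyx
          exact hyt (hyx ▸ hx)
        have h2 : (swap z x * ρ) y = z := by simp [mul_apply, hyx]
        simp [h2, Ne.symm hyz, hyt]
      · rw [happ y hyz hyx]
        have : (ρ y ≠ y) ↔ y ∈ t := by rw [← mem_support, hs]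
        simp [this, hyz]
  refine ⟨⟨z, by rw [hσz]; exact Ne.symm hzx, ?_⟩, hsupp⟩
  intro y hy
  have hy' : y ∈ insert z t := by
    rw [← hsupp]; exact mem_support.mpr hy
  rcases Finset.mem_insert.mp hy' with rfl | hyt
  · exact SameCycle.refl _ _
  · have hx' : ρ x ≠ x := mem_support.mp (by rw [hs]; exact hx)
    have hyρ : ρ y ≠ y := mem_support.mp (by rw [hs]; exact hyt)
    obtain ⟨i, hi⟩ := hc.exists_pow_eq hx' hyρ
    have base : (swap z x * ρ).SameCycle z x := ⟨1, by simp [hσz]⟩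
    have main : ∀ i : ℕ, (swap z x * ρ).SameCycle z ((ρ ^ i) x) := by
      intro i
      induction i with
      | zero => simpa using base
      | succ i ih =>
        by_cases hh : ρ ((ρ ^ i) x) = x
        · have h1 : (ρ ^ (i+1)) x = x := by rw [pow_succ', mul_apply, hh]
          rw [h1]; exact base
        · have hyt' : (ρ ^ i) x ∈ t := by
            rw [← hs]
            exact (pow_apply_mem_support).mpr (by rw [hs]; exact hx)
          have hne : (ρ ^ i) x ≠ z := fun h => hz (h ▸ hyt')
          have step : (swap z x * ρ) ((ρ ^ i) x) = (ρ ^ (i+1)) x := by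
            rw [happ _ hne hh, pow_succ', mul_apply]
          exact ih.trans ⟨1, by rw [zpow_one]; exact step⟩
    exact hi ▸ main i


lemma fiber_bij {s : Finset α} {φ : Perm α} (hφ : φ.support ⊆ s) {z c : α}
    (hz : z ∈ s) (hcs : c ∈ s) (hcz : c ≠ z) (hφc : φ c ≠ z) (h3 : 3 ≤ s.card) :
    ((fullSet s φ).filter fun τ => τ z = c).card
      = (fullSet (s.erase z) (swap z (φ c) * φ * swap c z)).card := by
  classical
  have hφcs : φ c ∈ s := by
    by_cases h : c ∈ φ.support
    · exact hφ (apply_mem_support.mpr h)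
    · rwa [notMem_support.mp h]
  refine Finset.card_bij' (fun τ _ => swap z c * τ) (fun τ' _ => swap z c * τ') ?_ ?_ ?_ ?_
  · -- forward membership
    intro τ hτ
    rw [Finset.mem_filter] at hτ
    obtain ⟨hτT, hτz⟩ := hτ
    rw [mem_fullSet] at hτT
    obtain ⟨⟨hτc, hτs⟩, hρc, hρs⟩ := hτT
    have hτzz : τ z ≠ z := mem_support.mp (by rw [hτs]; exact hz)
    have h2τ : τ (τ z) ≠ z := no_two_cycle hτc hτs hz h3
    have hρzz : (φ * τ) z ≠ z := mem_support.mp (by rw [hρs]; exact hz)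
    have h2ρ : (φ * τ) ((φ * τ) z) ≠ z := no_two_cycle hρc hρs hz h3
    have e1 : swap z c * τ = swap z (τ z) * τ := by rw [hτz]
    have e2 : (swap z (φ c) * φ * swap c z) * (swap z c * τ)
        = swap z ((φ * τ) z) * (φ * τ) := by
      have h4 : (φ * τ) z = φ c := by rw [mul_apply, hτz]
      rw [h4]
      simp only [← mul_assoc]
      rw [swap_comm c z]
      simp only [mul_assoc]
      rw [swap_mul_self_mul]
    rw [mem_fullSet]
    constructor
    · rw [e1]
      exact ⟨hτc.swap_mul hτzz h2τ,
        by rw [support_swap_mul_eq _ _ h2τ, hτs, sdiff_singleton_eq_erase]⟩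
    · rw [e2]
      exact ⟨hρc.swap_mul hρzz h2ρ,
        by rw [support_swap_mul_eq _ _ h2ρ, hρs, sdiff_singleton_eq_erase]⟩
  · -- backward membership
    intro τ' hτ'
    rw [mem_fullSet] at hτ'
    obtain ⟨⟨hc', hs'⟩, hpc', hps'⟩ := hτ'
    have hzne : z ∉ s.erase z := notMem_erase _ _
    have hce : c ∈ s.erase z := mem_erase.mpr ⟨hcz, hcs⟩
    have hφce : φ c ∈ s.erase z := mem_erase.mpr ⟨hφc, hφcs⟩
    obtain ⟨ic, is⟩ := insert_cycle hc' hs' hzne hce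
    have hins : insert z (s.erase z) = s := insert_erase hz
    have hτ'z : τ' z = z := notMem_support.mp (by rw [hs']; exact hzne)
    have hτz : (swap z c * τ') z = c := by simp [mul_apply, hτ'z]
    have e3 : φ * (swap z c * τ') = swap z (φ c) * ((swap z (φ c) * φ * swap c z) * τ') := by
      simp only [← mul_assoc]
      rw [swap_mul_self, one_mul, swap_comm c z]
    obtain ⟨ic2, is2⟩ := insert_cycle hpc' hps' hzne hφce
    rw [Finset.mem_filter, mem_fullSet]
    refine ⟨⟨⟨ic, by rw [is, hins]⟩, ?_⟩, hτz⟩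
    rw [e3]
    exact ⟨ic2, by rw [is2, hins]⟩
  · intro τ _
    exact swap_mul_self_mul z c τ
  · intro τ' _
    exact swap_mul_self_mul z c τ'


lemma psi_support {s : Finset α} {φ : Perm α} (hφ : φ.support ⊆ s) {z c : α}
    (hz : z ∈ s) (hcs : c ∈ s) (hcz : c ≠ z) (hφc : φ c ≠ z) (hφcs : φ c ∈ s) :
    (swap z (φ c) * φ * swap c z).support ⊆ s.erase z := by
  have hψz : (swap z (φ c) * φ * swap c z) z = z := by
    rw [mul_apply, mul_apply, swap_apply_right, swap_apply_right]
  intro x hx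
  rw [mem_erase]
  constructor
  · intro hxz
    subst hxz
    exact (mem_support.mp hx) hψz
  · have h1 := Equiv.Perm.support_mul_le (swap z (φ c) * φ) (swap c z) hx
    rcases Finset.mem_union.mp h1 with h2 | h2
    · have h3 := Equiv.Perm.support_mul_le (swap z (φ c)) φ h2
      rcases Finset.mem_union.mp h3 with h4 | h4
      · rw [support_swap (Ne.symm hφc)] at h4
        rcases Finset.mem_insert.mp h4 with rfl | h5
        · exact hz
        · rw [Finset.mem_singleton.mp h5]; exact hφcs
      · exact hφ h4
    · rw [support_swap hcz] at h2
      rcases Finset.mem_insert.mp h2 with rfl | h5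
      · exact hcs
      · rw [Finset.mem_singleton.mp h5]; exact hz


lemma base_case {s : Finset α} {φ : Perm α} (hcard : s.card = 2) (hsupp : φ.support ⊆ s)
    (hsgn : sign φ = 1) : 1 ≤ (fullSet s φ).card := by
  obtain ⟨a, b, hab, rfl⟩ := Finset.card_eq_two.mp hcard
  have hφ1 : φ = 1 := by
    by_contra h
    have h1 : 1 < φ.support.card := one_lt_card_support_of_ne_one h
    have h2 : φ.support.card ≤ 2 := by
      calc φ.support.card ≤ ({a,b} : Finset α).card := Finset.card_le_card hsupp
        _ = 2 := hcard
    have h3 : φ.support.card = 2 := by omega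
    obtain ⟨x, y, hxy, rfl⟩ := card_support_eq_two.mp h3
    rw [sign_swap hxy] at hsgn
    exact absurd hsgn (by decide)
  exact Finset.card_pos.mpr ⟨swap a b, mem_fullSet.mpr
    ⟨⟨Equiv.Perm.isCycle_swap hab, support_swap hab⟩,
     by rw [hφ1, one_mul]; exact ⟨Equiv.Perm.isCycle_swap hab, support_swap hab⟩⟩⟩

lemma lower_bound : ∀ n : ℕ, 2 ≤ n → ∀ (s : Finset α) (φ : Perm α), s.card = n →
    φ.support ⊆ s → sign φ = 1 → Nat.factorial (n-2) ≤ (fullSet s φ).card := by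
  intro n
  induction n using Nat.strong_induction_on with
  | _ n ih =>
    intro h2 s φ hcard hsupp hsgn
    rcases eq_or_lt_of_le h2 with heq | h3
    · rw [← heq]
      simpa using base_case (by rw [hcard, ← heq]) hsupp hsgn
    · have h3' : 3 ≤ n := h3
      obtain ⟨z, hz⟩ := Finset.card_pos.mp (show 0 < s.card by omega)
      set C := (s.erase z).erase (φ⁻¹ z) with hC
      have hmem : ∀ τ ∈ fullSet s φ, τ z ∈ C := by
        intro τ hτ
        rw [mem_fullSet] at hτ
        obtain ⟨⟨hτc, hτs⟩, hρc, hρs⟩ := hτ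
        have h1 : τ z ∈ s := by
          rw [← hτs]; exact apply_mem_support.mpr (by rw [hτs]; exact hz)
        have h2' : τ z ≠ z := mem_support.mp (by rw [hτs]; exact hz)
        have h4 : τ z ≠ φ⁻¹ z := by
          intro h
          have h5 : (φ * τ) z = z := by rw [mul_apply, h, ← Perm.mul_apply, mul_inv_cancel, Perm.one_apply]
          exact mem_support.mp (by rw [hρs]; exact hz) h5
        exact mem_erase.mpr ⟨h4, mem_erase.mpr ⟨h2', h1⟩⟩
      have hsum := Finset.card_eq_sum_card_fiberwise hmem
      have hCcard : n - 2 ≤ C.card := by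
        have e1 : (s.erase z).card = n - 1 := by rw [card_erase_of_mem hz, hcard]
        by_cases hin : φ⁻¹ z ∈ s.erase z
        · rw [hC, card_erase_of_mem hin, e1]; omega
        · rw [hC, Finset.erase_eq_of_notMem hin, e1]; omega
      have hfib : ∀ c ∈ C,
          Nat.factorial (n-3) ≤ ((fullSet s φ).filter fun τ => τ z = c).card := by
        intro c hc
        obtain ⟨hc1, hc2⟩ := mem_erase.mp hc
        obtain ⟨hczne, hcs⟩ := mem_erase.mp hc2
        have hφc : φ c ≠ z := by
          intro h
          apply hc1
          rw [← h, ← Perm.mul_apply, inv_mul_cancel, Perm.one_apply]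
        have hφcs : φ c ∈ s := by
          by_cases h : c ∈ φ.support
          · exact hsupp (apply_mem_support.mpr h)
          · rwa [notMem_support.mp h]
        rw [fiber_bij hsupp hz hcs hczne hφc (by omega)]
        have hsgn' : sign (swap z (φ c) * φ * swap c z) = 1 := by
          rw [Equiv.Perm.sign_mul, Equiv.Perm.sign_mul, sign_swap (Ne.symm hφc), sign_swap hczne, hsgn]
          decide
        have hscard : (s.erase z).card = n - 1 := by rw [card_erase_of_mem hz, hcard]
        have hres := ih (n-1) (by omega) (by omega) (s.erase z) _ hscard
          (psi_support hsupp hz hcs hczne hφc hφcs) hsgn'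
        simpa [show n - 1 - 2 = n - 3 by omega] using hres
      calc Nat.factorial (n-2) = (n-2) * Nat.factorial (n-3) := by
            rw [show n - 2 = (n-3)+1 by omega, Nat.factorial_succ]
        _ ≤ C.card * Nat.factorial (n-3) := Nat.mul_le_mul_right _ hCcard
        _ = ∑ _c ∈ C, Nat.factorial (n-3) := by rw [Finset.sum_const, smul_eq_mul]
        _ ≤ ∑ c ∈ C, ((fullSet s φ).filter fun τ => τ z = c).card :=
            Finset.sum_le_sum hfib
        _ = (fullSet s φ).card := hsum.symm


lemma count_full : ∀ n : ℕ, 2 ≤ n → ∀ s : Finset α, s.card = n →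
    (fullSet s (1 : Perm α)).card = Nat.factorial (n-1) := by
  intro n
  induction n using Nat.strong_induction_on with
  | _ n ih =>
    intro h2 s hcard
    rcases eq_or_lt_of_le h2 with heq | h3
    · obtain ⟨a, b, hab, rfl⟩ := Finset.card_eq_two.mp (by rw [hcard, ← heq])
      have hfs : fullSet {a,b} (1 : Perm α) = {swap a b} := by
        ext τ
        rw [mem_fullSet, Finset.mem_singleton]
        constructor
        · rintro ⟨⟨hc, hsup⟩, -⟩
          have h2' : τ.support.card = 2 := by rw [hsup, hcard, ← heq]
          obtain ⟨x, y, hxy, rfl⟩ := card_support_eq_two.mp h2'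
          have hset : ({x,y} : Finset α) = {a,b} := by rw [← support_swap hxy, hsup]
          have hx : x = a ∨ x = b := by
            have hh : x ∈ ({a,b} : Finset α) := by rw [← hset]; simp
            simpa using hh
          have hy : y = a ∨ y = b := by
            have hh : y ∈ ({a,b} : Finset α) := by rw [← hset]; simp
            simpa using hh
          rcases hx with rfl | rfl
          · rcases hy with rfl | rfl
            · exact absurd rfl hxy
            · rfl
          · rcases hy with rfl | rfl
            · exact swap_comm _ _
            · exact absurd rfl hxy
        · rintro rfl
          refine ⟨⟨Equiv.Perm.isCycle_swap hab, support_swap hab⟩, ?_⟩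
          rw [one_mul]
          exact ⟨Equiv.Perm.isCycle_swap hab, support_swap hab⟩
      rw [hfs, ← heq]
      simp
    · have h3' : 3 ≤ n := h3
      obtain ⟨z, hz⟩ := Finset.card_pos.mp (show 0 < s.card by omega)
      have hmem : ∀ τ ∈ fullSet s (1 : Perm α), τ z ∈ s.erase z := by
        intro τ hτ
        rw [mem_fullSet] at hτ
        obtain ⟨⟨hτc, hτs⟩, -⟩ := hτ
        exact mem_erase.mpr ⟨mem_support.mp (by rw [hτs]; exact hz),
          by rw [← hτs]; exact apply_mem_support.mpr (by rw [hτs]; exact hz)⟩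
      have hsum := Finset.card_eq_sum_card_fiberwise hmem
      have hfib : ∀ c ∈ s.erase z,
          ((fullSet s (1 : Perm α)).filter fun τ => τ z = c).card = Nat.factorial (n-2) := by
        intro c hc
        obtain ⟨hczne, hcs⟩ := mem_erase.mp hc
        have h1 : (1 : Perm α).support ⊆ s := by simp
        have hone : (1 : Perm α) c ≠ z := hczne
        rw [fiber_bij h1 hz hcs hczne hone (by omega)]
        have hpsi : swap z ((1 : Perm α) c) * 1 * swap c z = 1 := by
          rw [show ((1 : Perm α) c) = c from rfl, mul_one, swap_comm c z, swap_mul_self]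
        rw [hpsi]
        have hscard : (s.erase z).card = n - 1 := by rw [card_erase_of_mem hz, hcard]
        have hres := ih (n-1) (by omega) (by omega) (s.erase z) hscard
        rw [hres, show n - 1 - 1 = n - 2 by omega]
      calc (fullSet s (1 : Perm α)).card
          = ∑ c ∈ s.erase z, ((fullSet s (1 : Perm α)).filter fun τ => τ z = c).card := hsum
        _ = ∑ _c ∈ s.erase z, Nat.factorial (n-2) := Finset.sum_congr rfl hfib
        _ = (s.erase z).card * Nat.factorial (n-2) := by rw [Finset.sum_const, smul_eq_mul]
        _ = (n-1) * Nat.factorial (n-2) := by rw [card_erase_of_mem hz, hcard]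
        _ = Nat.factorial (n-1) := by rw [show n - 1 = (n-2)+1 by omega, Nat.factorial_succ]

end Stmt9Aux


/-- if `κ ≥ 3` and `φ` is an even permutation of `[κ]` all of whose cycles have
odd length, then the number of cyclic permutations `τ` of `[κ]` such that `φ∘τ` is also cyclic
lies between `(κ-2)!` and `(κ-1)!`. -/
theorem stmt9 (κ : ℕ) (hκ : 3 ≤ κ) (φ : Equiv.Perm (Fin κ))
    (heven : Equiv.Perm.sign φ = 1)
    (hodd : ∀ i ∈ φ.cycleType, Odd i) :
    Nat.factorial (κ - 2) ≤
      ({τ : Equiv.Perm (Fin κ) | (τ.IsCycle ∧ τ.support = Finset.univ) ∧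
        ((φ * τ).IsCycle ∧ (φ * τ).support = Finset.univ)} : Set (Equiv.Perm (Fin κ))).ncard ∧
    ({τ : Equiv.Perm (Fin κ) | (τ.IsCycle ∧ τ.support = Finset.univ) ∧
        ((φ * τ).IsCycle ∧ (φ * τ).support = Finset.univ)} : Set (Equiv.Perm (Fin κ))).ncard ≤
      Nat.factorial (κ - 1) := by
  classical
  have huniv : (Finset.univ : Finset (Fin κ)).card = κ := by simp
  have hset : ({τ : Equiv.Perm (Fin κ) | (τ.IsCycle ∧ τ.support = Finset.univ) ∧
        ((φ * τ).IsCycle ∧ (φ * τ).support = Finset.univ)} : Set (Equiv.Perm (Fin κ)))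
      = ↑(Stmt9Aux.fullSet (Finset.univ : Finset (Fin κ)) φ) := by
    ext τ
    rw [Set.mem_setOf_eq, Finset.mem_coe, Stmt9Aux.mem_fullSet]
  rw [hset, Set.ncard_coe_finset]
  constructor
  · exact Stmt9Aux.lower_bound κ (by omega) Finset.univ φ huniv (Finset.subset_univ _) heven
  · have hsub : Stmt9Aux.fullSet (Finset.univ : Finset (Fin κ)) φ ⊆
        Stmt9Aux.fullSet (Finset.univ : Finset (Fin κ)) 1 := by
      intro τ hτ
      rw [Stmt9Aux.mem_fullSet] at hτ ⊢
      exact ⟨hτ.1, by rw [one_mul]; exact hτ.1⟩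
    calc (Stmt9Aux.fullSet (Finset.univ : Finset (Fin κ)) φ).card
        ≤ (Stmt9Aux.fullSet (Finset.univ : Finset (Fin κ)) (1 : Equiv.Perm (Fin κ))).card :=
          Finset.card_le_card hsub
      _ = Nat.factorial (κ - 1) := Stmt9Aux.count_full κ (by omega) _ huniv
end

section
/- Let κ, s, t be integers with 2 ≤ s ≤ κ and 1 ≤ t ≤ s−1, and let φ be a permutation of [κ]. Fix a cyclic permutation τ with φ∘τ cyclic, and fix a set of t 'agreeing' values. Then the number of cyclic permutations τ' of [κ] such that φ∘τ' is cyclic and τ' agrees with τ on a prescribed set of t points is at most (κ − t − 1)!. -/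
open Equiv Finset

namespace Stmt18Aux

variable {κ : ℕ} (A : Finset (Fin κ)) (τ' : Equiv.Perm (Fin κ))

/-- first return time to `Aᶜ` (equals `κ` as a default fallback). -/
def fr (b : Fin κ) : ℕ :=
  Nat.find (⟨κ, Or.inl rfl⟩ : ∃ k, k = κ ∨ (0 < k ∧ (τ' ^ k) b ∉ A))

/-- first return map. -/
def sig (b : Fin κ) : Fin κ := (τ' ^ fr A τ' b) b

variable {A τ'}

section basic

variable (hc : τ'.IsCycle) (hsupp : τ'.support = Finset.univ)
include hc hsupp

lemma orderOf_eq : orderOf τ' = κ := by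
  rw [hc.orderOf, hsupp, Finset.card_univ, Fintype.card_fin]

lemma pow_card_apply (b : Fin κ) : (τ' ^ κ) b = b := by
  have h1 : τ' ^ κ = 1 := orderOf_dvd_iff_pow_eq_one.mp (dvd_of_eq (orderOf_eq hc hsupp))
  rw [h1]; rfl

lemma pow_ne {d : ℕ} (hd : 0 < d) (hdκ : d < κ) (b : Fin κ) : (τ' ^ d) b ≠ b := by
  intro h
  have hb : τ' b ≠ b := by
    have : b ∈ τ'.support := hsupp ▸ Finset.mem_univ b
    exact Equiv.Perm.mem_support.mp this
  have h1 : τ' ^ d = 1 := (hc.pow_eq_one_iff' hb).mpr h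
  have h2 : orderOf τ' ∣ d := orderOf_dvd_of_pow_eq_one h1
  rw [orderOf_eq hc hsupp] at h2
  exact absurd (Nat.le_of_dvd hd h2) (not_le.mpr hdκ)

lemma fr_def {b : Fin κ} (hb : b ∉ A) :
    0 < fr A τ' b ∧ (τ' ^ fr A τ' b) b ∉ A ∧
      (∀ j, 0 < j → j < fr A τ' b → (τ' ^ j) b ∈ A) ∧ fr A τ' b ≤ κ := by
  have hκpos : 0 < κ := by
    obtain ⟨x, -, -⟩ := hc
    exact x.pos
  have hmin : ∀ j, 0 < j → j < fr A τ' b → (τ' ^ j) b ∈ A := by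
    intro j hj hjf
    by_contra hmem
    exact Nat.find_min _ hjf (Or.inr ⟨hj, hmem⟩)
  have hle : fr A τ' b ≤ κ := Nat.find_le (Or.inl rfl)
  rcases Nat.find_spec (⟨κ, Or.inl rfl⟩ : ∃ k, k = κ ∨ (0 < k ∧ (τ' ^ k) b ∉ A)) with h | h
  · refine ⟨by rw [show fr A τ' b = κ from h]; exact hκpos, ?_, hmin, hle⟩
    show (τ' ^ fr A τ' b) b ∉ A
    rw [show fr A τ' b = κ from h, pow_card_apply hc hsupp]
    exact hb
  · exact ⟨h.1, h.2, hmin, hle⟩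

lemma sig_not_mem {b : Fin κ} (hb : b ∉ A) : sig A τ' b ∉ A :=
  (fr_def hc hsupp hb).2.1

end basic

section recon

variable {τ : Equiv.Perm (Fin κ)}
variable (hc : τ'.IsCycle) (hsupp : τ'.support = Finset.univ) (hag : ∀ a ∈ A, τ' a = τ a)
include hc hsupp hag

lemma chain {b : Fin κ} (hb : b ∉ A) :
    ∀ j, j ≤ fr A τ' b - 1 → (τ⁻¹ ^ j) (sig A τ' b) = (τ' ^ (fr A τ' b - j)) b := by
  obtain ⟨hpos, hspec, hmin, -⟩ := fr_def hc hsupp hb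
  intro j
  induction j with
  | zero => intro _; simp [sig]
  | succ j ih =>
    intro hj
    have hj' : j ≤ fr A τ' b - 1 := by omega
    have ha : (τ' ^ (fr A τ' b - (j + 1))) b ∈ A := hmin _ (by omega) (by omega)
    have hstep : τ' ((τ' ^ (fr A τ' b - (j + 1))) b) = (τ' ^ (fr A τ' b - j)) b := by
      rw [← Equiv.Perm.mul_apply, ← pow_succ']
      congr 2
      omega
    have hY : τ ((τ' ^ (fr A τ' b - (j + 1))) b) = (τ' ^ (fr A τ' b - j)) b := by
      rw [← hag _ ha]; exact hstep
    rw [pow_succ', Equiv.Perm.mul_apply, ih hj', ← hY, Equiv.Perm.inv_def, Equiv.symm_apply_apply]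

lemma recon_val {b : Fin κ} (hb : b ∉ A) :
    (τ⁻¹ ^ (fr A τ' b - 1)) (sig A τ' b) = τ' b := by
  obtain ⟨hpos, -, -, -⟩ := fr_def hc hsupp hb
  have h := chain hc hsupp hag hb (fr A τ' b - 1) le_rfl
  rwa [show fr A τ' b - (fr A τ' b - 1) = 1 by omega, pow_one] at h

lemma chain_mem {b : Fin κ} (hb : b ∉ A) :
    ∀ j, 0 < j → j < fr A τ' b → (τ⁻¹ ^ j) (sig A τ' b) ∈ A := by
  obtain ⟨hpos, hspec, hmin, -⟩ := fr_def hc hsupp hb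
  intro j hj hjf
  rw [chain hc hsupp hag hb j (by omega)]
  exact hmin _ (by omega) (by omega)

lemma last_not_mem {b : Fin κ} (hb : b ∉ A) :
    (τ⁻¹ ^ fr A τ' b) (sig A τ' b) ∉ A := by
  obtain ⟨hpos, -, -, -⟩ := fr_def hc hsupp hb
  have h1 := recon_val hc hsupp hag hb
  have h2 : (τ⁻¹ ^ fr A τ' b) (sig A τ' b) = τ⁻¹ (τ' b) := by
    rw [show fr A τ' b = (fr A τ' b - 1) + 1 by omega, pow_succ', Equiv.Perm.mul_apply, h1]
  rw [h2]
  intro hmem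
  have h3 : τ' (τ⁻¹ (τ' b)) = τ (τ⁻¹ (τ' b)) := hag _ hmem
  rw [Equiv.Perm.inv_def, Equiv.apply_symm_apply] at h3
  have h4 : τ⁻¹ (τ' b) = b := τ'.injective h3
  rw [h4] at hmem
  exact hb hmem

lemma point_eq {τ'₂ : Equiv.Perm (Fin κ)} (hc2 : τ'₂.IsCycle)
    (hsupp2 : τ'₂.support = Finset.univ) (hag2 : ∀ a ∈ A, τ'₂ a = τ a)
    {b : Fin κ} (hb : b ∉ A) (hs : sig A τ' b = sig A τ'₂ b) : τ' b = τ'₂ b := by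
  obtain ⟨hpos1, -, -, -⟩ := fr_def hc hsupp hb
  obtain ⟨hpos2, -, -, -⟩ := fr_def hc2 hsupp2 hb
  rcases lt_trichotomy (fr A τ' b) (fr A τ'₂ b) with h | h | h
  · exfalso
    have hm := chain_mem hc2 hsupp2 hag2 hb (fr A τ' b) hpos1 h
    rw [← hs] at hm
    exact last_not_mem hc hsupp hag hb hm
  · rw [← recon_val hc hsupp hag hb, ← recon_val hc2 hsupp2 hag2 hb, hs, h]
  · exfalso
    have hm := chain_mem hc hsupp hag hb (fr A τ'₂ b) hpos2 h
    rw [hs] at hm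
    exact last_not_mem hc2 hsupp2 hag2 hb hm

end recon

section orbit

variable (A τ')

/-- cumulative first-return times -/
def Q (b₀ : Fin κ) : ℕ → ℕ
  | 0 => 0
  | i + 1 => Q b₀ i + fr A τ' ((sig A τ')^[i] b₀)

variable {A τ'}
variable (hc : τ'.IsCycle) (hsupp : τ'.support = Finset.univ)
include hc hsupp

variable {b₀ : Fin κ}

lemma iter_not_mem (hb₀ : b₀ ∉ A) : ∀ i, (sig A τ')^[i] b₀ ∉ A := by
  intro i
  induction i with
  | zero => exact hb₀
  | succ i ih =>
    rw [Function.iterate_succ_apply']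
    exact sig_not_mem hc hsupp ih

lemma iter_eq_pow (hb₀ : b₀ ∉ A) : ∀ i, (sig A τ')^[i] b₀ = (τ' ^ Q A τ' b₀ i) b₀ := by
  intro i
  induction i with
  | zero => simp [Q]
  | succ i ih =>
    rw [Function.iterate_succ_apply']
    show (τ' ^ fr A τ' ((sig A τ')^[i] b₀)) ((sig A τ')^[i] b₀) = _
    rw [ih]
    rw [← Equiv.Perm.mul_apply, ← pow_add, show Q A τ' b₀ (i + 1)
        = fr A τ' ((τ' ^ Q A τ' b₀ i) b₀) + Q A τ' b₀ i from by simp [Q, ih]; omega]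

lemma Q_strictMono (hb₀ : b₀ ∉ A) : StrictMono (Q A τ' b₀) := by
  apply strictMono_nat_of_lt_succ
  intro i
  have hpos := (fr_def hc hsupp (iter_not_mem hc hsupp hb₀ i)).1
  simp only [Q]
  omega

lemma count_eq (hb₀ : b₀ ∉ A) :
    ∀ i, #((Finset.Ioc 0 (Q A τ' b₀ i)).filter fun j => (τ' ^ j) b₀ ∉ A) = i := by
  intro i
  induction i with
  | zero => simp [Q]
  | succ i ih =>
    obtain ⟨hfp, hfs, hfm, -⟩ := fr_def hc hsupp (iter_not_mem hc hsupp hb₀ i)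
    have hQlt : Q A τ' b₀ i < Q A τ' b₀ (i + 1) := Q_strictMono hc hsupp hb₀ (Nat.lt_succ_self i)
    have hQpos : 0 < Q A τ' b₀ (i + 1) := by
      have := (Q_strictMono hc hsupp hb₀).le_iff_le.mpr (Nat.zero_le (i+1))
      simp only [Q] at this ⊢
      omega
    have hpow : ∀ j, Q A τ' b₀ i < j → j ≤ Q A τ' b₀ (i + 1) →
        (τ' ^ j) b₀ = (τ' ^ (j - Q A τ' b₀ i)) ((sig A τ')^[i] b₀) := by
      intro j h1 h2
      rw [iter_eq_pow hc hsupp hb₀ i, ← Equiv.Perm.mul_apply, ← pow_add]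
      congr 2
      omega
    have key : (Finset.Ioc 0 (Q A τ' b₀ (i + 1))).filter (fun j => (τ' ^ j) b₀ ∉ A)
        = insert (Q A τ' b₀ (i + 1))
          ((Finset.Ioc 0 (Q A τ' b₀ i)).filter fun j => (τ' ^ j) b₀ ∉ A) := by
      ext j
      simp only [Finset.mem_filter, Finset.mem_Ioc, Finset.mem_insert]
      constructor
      · rintro ⟨⟨hj0, hjle⟩, hP⟩
        by_cases hcase : j ≤ Q A τ' b₀ i
        · exact Or.inr ⟨⟨hj0, hcase⟩, hP⟩
        · left
          push_neg at hcase
          by_contra hne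
          have hd : j - Q A τ' b₀ i < fr A τ' ((sig A τ')^[i] b₀) := by
            simp only [Q] at hjle hne ⊢
            omega
          have := hfm _ (by omega) hd
          rw [← hpow j hcase hjle] at this
          exact hP this
      · rintro (rfl | ⟨⟨hj0, hjle⟩, hP⟩)
        · refine ⟨⟨hQpos, le_rfl⟩, ?_⟩
          rw [hpow _ hQlt le_rfl, show Q A τ' b₀ (i+1) - Q A τ' b₀ i
              = fr A τ' ((sig A τ')^[i] b₀) from by simp only [Q]; omega]
          exact hfs
        · exact ⟨⟨hj0, hjle.trans hQlt.le⟩, hP⟩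
    rw [key, Finset.card_insert_of_notMem, ih]
    simp only [Finset.mem_filter, Finset.mem_Ioc]
    push_neg
    intro h1
    omega

lemma count_kappa (hb₀ : b₀ ∉ A) :
    #((Finset.Ioc 0 κ).filter fun j => (τ' ^ j) b₀ ∉ A) = #Aᶜ := by
  have hκ : 0 < κ := b₀.pos
  apply Finset.card_bij (fun j _ => (τ' ^ j) b₀)
  · intro j hj
    simp only [Finset.mem_filter] at hj
    simpa [Finset.mem_compl] using hj.2
  · intro j₁ hj₁ j₂ hj₂ heq
    simp only [Finset.mem_filter, Finset.mem_Ioc] at hj₁ hj₂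
    by_contra hne
    rcases Nat.lt_or_ge j₁ j₂ with h | h
    · have : (τ' ^ (j₂ - j₁)) ((τ' ^ j₁) b₀) = (τ' ^ j₁) b₀ := by
        rw [← Equiv.Perm.mul_apply, ← pow_add, show j₂ - j₁ + j₁ = j₂ by omega, heq]
      exact pow_ne hc hsupp (by omega) (by omega) _ this
    · have hlt : j₂ < j₁ := by omega
      have : (τ' ^ (j₁ - j₂)) ((τ' ^ j₂) b₀) = (τ' ^ j₂) b₀ := by
        rw [← Equiv.Perm.mul_apply, ← pow_add, show j₁ - j₂ + j₂ = j₁ by omega, ← heq]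
      exact pow_ne hc hsupp (by omega) (by omega) _ this
  · intro x hx
    have hmove : ∀ y : Fin κ, τ' y ≠ y := by
      intro y
      exact Equiv.Perm.mem_support.mp (hsupp ▸ Finset.mem_univ y)
    obtain ⟨i, hi⟩ := hc.exists_pow_eq (hmove b₀) (hmove x)
    have hmod : (τ' ^ (i % κ)) b₀ = x := by
      rw [← hi]
      congr 1
      conv_rhs => rw [← pow_mod_orderOf]
      rw [orderOf_eq hc hsupp]
    by_cases h0 : i % κ = 0
    · refine ⟨κ, ?_, ?_⟩
      · simp only [Finset.mem_filter, Finset.mem_Ioc]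
        refine ⟨⟨hκ, le_rfl⟩, ?_⟩
        rw [pow_card_apply hc hsupp]
        exact hb₀
      · rw [pow_card_apply hc hsupp, ← hmod, h0, pow_zero]
        rfl
    · refine ⟨i % κ, ?_, hmod⟩
      simp only [Finset.mem_filter, Finset.mem_Ioc]
      refine ⟨⟨by omega, (Nat.mod_lt i hκ).le⟩, ?_⟩
      rw [hmod]
      simpa [Finset.mem_compl] using hx

lemma Q_top (hb₀ : b₀ ∉ A) : Q A τ' b₀ #Aᶜ = κ := by
  have hκ : 0 < κ := b₀.pos
  set M := #Aᶜ with hM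
  have hMpos : 0 < M := Finset.card_pos.mpr ⟨b₀, Finset.mem_compl.mpr hb₀⟩
  have h1 := count_eq hc hsupp hb₀ M
  have h2 := count_kappa hc hsupp hb₀
  by_contra hne
  have hQpos : 0 < Q A τ' b₀ M := by
    have := Q_strictMono hc hsupp hb₀ hMpos
    simpa [Q] using this
  rcases Nat.lt_or_ge (Q A τ' b₀ M) κ with h | h
  · have hsub : insert κ ((Finset.Ioc 0 (Q A τ' b₀ M)).filter fun j => (τ' ^ j) b₀ ∉ A)
        ⊆ (Finset.Ioc 0 κ).filter fun j => (τ' ^ j) b₀ ∉ A := by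
      intro j hj
      simp only [Finset.mem_insert, Finset.mem_filter, Finset.mem_Ioc] at hj ⊢
      rcases hj with rfl | ⟨⟨hj0, hjle⟩, hP⟩
      · exact ⟨⟨hκ, le_rfl⟩, by rw [pow_card_apply hc hsupp]; exact hb₀⟩
      · exact ⟨⟨hj0, by omega⟩, hP⟩
    have hninsert : κ ∉ (Finset.Ioc 0 (Q A τ' b₀ M)).filter fun j => (τ' ^ j) b₀ ∉ A := by
      simp only [Finset.mem_filter, Finset.mem_Ioc]
      push_neg
      intro h'
      omega
    have := Finset.card_le_card hsub
    rw [Finset.card_insert_of_notMem hninsert, h1, h2] at this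
    omega
  · have hgt : κ < Q A τ' b₀ M := by omega
    have hsub : insert (Q A τ' b₀ M) ((Finset.Ioc 0 κ).filter fun j => (τ' ^ j) b₀ ∉ A)
        ⊆ (Finset.Ioc 0 (Q A τ' b₀ M)).filter fun j => (τ' ^ j) b₀ ∉ A := by
      intro j hj
      simp only [Finset.mem_insert, Finset.mem_filter, Finset.mem_Ioc] at hj ⊢
      rcases hj with rfl | ⟨⟨hj0, hjle⟩, hP⟩
      · refine ⟨⟨hQpos, le_rfl⟩, ?_⟩
        rw [← iter_eq_pow hc hsupp hb₀]
        exact iter_not_mem hc hsupp hb₀ M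
      · exact ⟨⟨hj0, by omega⟩, hP⟩
    have hninsert : Q A τ' b₀ M ∉ (Finset.Ioc 0 κ).filter fun j => (τ' ^ j) b₀ ∉ A := by
      simp only [Finset.mem_filter, Finset.mem_Ioc]
      push_neg
      intro h'
      omega
    have := Finset.card_le_card hsub
    rw [Finset.card_insert_of_notMem hninsert, h1, h2] at this
    omega

lemma iter_top (hb₀ : b₀ ∉ A) : (sig A τ')^[#Aᶜ] b₀ = b₀ := by
  rw [iter_eq_pow hc hsupp hb₀, Q_top hc hsupp hb₀, pow_card_apply hc hsupp]

lemma iter_inj (hb₀ : b₀ ∉ A) :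
    ∀ i, i < #Aᶜ → ∀ j, j < #Aᶜ → (sig A τ')^[i] b₀ = (sig A τ')^[j] b₀ → i = j := by
  have key : ∀ i j, i < j → j < #Aᶜ → (sig A τ')^[i] b₀ ≠ (sig A τ')^[j] b₀ := by
    intro i j hij hj heq
    have hQi : Q A τ' b₀ i < Q A τ' b₀ j := Q_strictMono hc hsupp hb₀ hij
    have hQj : Q A τ' b₀ j < κ := by
      have h1 := Q_top hc hsupp hb₀
      have h2 := Q_strictMono hc hsupp hb₀ hj
      omega
    rw [iter_eq_pow hc hsupp hb₀ i, iter_eq_pow hc hsupp hb₀ j] at heq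
    have : (τ' ^ (Q A τ' b₀ j - Q A τ' b₀ i)) ((τ' ^ Q A τ' b₀ i) b₀)
        = (τ' ^ Q A τ' b₀ i) b₀ := by
      rw [← Equiv.Perm.mul_apply, ← pow_add,
        show Q A τ' b₀ j - Q A τ' b₀ i + Q A τ' b₀ i = Q A τ' b₀ j by omega, ← heq]
    exact pow_ne hc hsupp (by omega) (by omega) _ this
  intro i hi j hj heq
  rcases lt_trichotomy i j with h | h | h
  · exact absurd heq (key i j h hj)
  · exact h
  · exact absurd heq.symm (key j i h hi)

lemma iter_surj (hb₀ : b₀ ∉ A) :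
    ∀ x, x ∉ A → ∃ i, i < #Aᶜ ∧ (sig A τ')^[i] b₀ = x := by
  have himg : (Finset.range #Aᶜ).image (fun i => (sig A τ')^[i] b₀) = Aᶜ := by
    apply Finset.eq_of_subset_of_card_le
    · intro x hx
      simp only [Finset.mem_image, Finset.mem_range] at hx
      obtain ⟨i, hi, rfl⟩ := hx
      exact Finset.mem_compl.mpr (iter_not_mem hc hsupp hb₀ i)
    · rw [Finset.card_image_of_injOn, Finset.card_range]
      intro i hi j hj heq
      simp only [Finset.mem_coe, Finset.mem_range] at hi hj
      exact iter_inj hc hsupp hb₀ i hi j hj heq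
  intro x hx
  have : x ∈ (Finset.range #Aᶜ).image (fun i => (sig A τ')^[i] b₀) := by
    rw [himg]
    exact Finset.mem_compl.mpr hx
  simp only [Finset.mem_image, Finset.mem_range] at this
  obtain ⟨i, hi, heq⟩ := this
  exact ⟨i, hi, heq⟩

end orbit

end Stmt18Aux

open Stmt18Aux in
/-- let `2 ≤ s ≤ κ`, `1 ≤ t ≤ s−1`, `φ` a permutation of `[κ]`, `τ` a cyclic
permutation with `φ∘τ` cyclic, and `A` a set of `t` prescribed points. Then the number of
cyclic permutations `τ'` with `φ∘τ'` cyclic that agree with `τ` on `A` is at most `(κ−t−1)!`. -/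
theorem stmt18 (κ s t : ℕ) (hs2 : 2 ≤ s) (hsκ : s ≤ κ) (ht1 : 1 ≤ t) (hts : t ≤ s - 1)
    (φ τ : Equiv.Perm (Fin κ))
    (hτ : τ.IsCycle ∧ τ.support = Finset.univ)
    (hφτ : (φ * τ).IsCycle ∧ (φ * τ).support = Finset.univ)
    (A : Finset (Fin κ)) (hA : A.card = t) :
    ({τ' : Equiv.Perm (Fin κ) | (τ'.IsCycle ∧ τ'.support = Finset.univ) ∧
        ((φ * τ').IsCycle ∧ (φ * τ').support = Finset.univ) ∧
        ∀ a ∈ A, τ' a = τ a} : Set (Equiv.Perm (Fin κ))).ncard ≤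
      Nat.factorial (κ - t - 1) := by
  classical
  have htκ : t < κ := by omega
  have hAcard : #Aᶜ = κ - t := by rw [Finset.card_compl, hA, Fintype.card_fin]
  have hMpos : 0 < #Aᶜ := by omega
  obtain ⟨b₀, hb₀c⟩ := Finset.card_pos.mp hMpos
  have hb₀ : b₀ ∉ A := Finset.mem_compl.mp hb₀c
  set S : Set (Equiv.Perm (Fin κ)) := {τ' : Equiv.Perm (Fin κ) |
      (τ'.IsCycle ∧ τ'.support = Finset.univ) ∧
      ((φ * τ').IsCycle ∧ (φ * τ').support = Finset.univ) ∧
      ∀ a ∈ A, τ' a = τ a} with hSdef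
  have key1 : ∀ τ' : Equiv.Perm (Fin κ), τ'.IsCycle → τ'.support = Finset.univ →
      ∀ i : ℕ, i + 1 < #Aᶜ → (sig A τ')^[i + 1] b₀ ∈ Aᶜ.erase b₀ := by
    intro τ' hc hsupp i hi
    rw [Finset.mem_erase]
    refine ⟨?_, Finset.mem_compl.mpr (iter_not_mem hc hsupp hb₀ _)⟩
    intro h0
    have := iter_inj hc hsupp hb₀ (i + 1) hi 0 hMpos (by simpa using h0)
    omega
  let G : S → (Fin (#Aᶜ - 1) ↪ {x : Fin κ // x ∈ Aᶜ.erase b₀}) := fun p =>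
    ⟨fun i => ⟨(sig A p.1)^[(i : ℕ) + 1] b₀,
        key1 p.1 p.2.1.1 p.2.1.2 i (by have := i.isLt; omega)⟩,
      by
        intro i j hij
        have h1 : (sig A p.1)^[(i : ℕ) + 1] b₀ = (sig A p.1)^[(j : ℕ) + 1] b₀ :=
          congrArg Subtype.val hij
        have h2 := iter_inj p.2.1.1 p.2.1.2 hb₀ ((i : ℕ) + 1) (by have := i.isLt; omega)
          ((j : ℕ) + 1) (by have := j.isLt; omega) h1
        exact Fin.ext (by omega)⟩
  have hG : Function.Injective G := by
    rintro ⟨τ₁, h1⟩ ⟨τ₂, h2⟩ hGeq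
    obtain ⟨⟨hc1, hs1⟩, -, hag1⟩ := id h1
    obtain ⟨⟨hc2, hs2⟩, -, hag2⟩ := id h2
    have heqfun : ∀ i : Fin (#Aᶜ - 1),
        (sig A τ₁)^[(i : ℕ) + 1] b₀ = (sig A τ₂)^[(i : ℕ) + 1] b₀ := by
      intro i
      have := DFunLike.congr_fun hGeq i
      exact congrArg Subtype.val this
    have hall : ∀ j, j ≤ #Aᶜ → (sig A τ₁)^[j] b₀ = (sig A τ₂)^[j] b₀ := by
      intro j hj
      rcases Nat.eq_zero_or_pos j with rfl | hj0
      · rfl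
      rcases eq_or_lt_of_le hj with rfl | hjlt
      · rw [iter_top hc1 hs1 hb₀, iter_top hc2 hs2 hb₀]
      · have hi : j - 1 < #Aᶜ - 1 := by omega
        have := heqfun ⟨j - 1, hi⟩
        simpa [show j - 1 + 1 = j by omega] using this
    have hsig : ∀ b, b ∉ A → sig A τ₁ b = sig A τ₂ b := by
      intro b hb
      obtain ⟨i, hiM, hib⟩ := iter_surj hc1 hs1 hb₀ b hb
      have hib2 : (sig A τ₂)^[i] b₀ = b := by rw [← hall i hiM.le]; exact hib
      have e1 : sig A τ₁ b = (sig A τ₁)^[i + 1] b₀ := by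
        rw [Function.iterate_succ_apply', hib]
      have e2 : sig A τ₂ b = (sig A τ₂)^[i + 1] b₀ := by
        rw [Function.iterate_succ_apply', hib2]
      rw [e1, e2, hall (i + 1) (by omega)]
    have : τ₁ = τ₂ := by
      apply Equiv.ext
      intro x
      by_cases hx : x ∈ A
      · rw [hag1 x hx, hag2 x hx]
      · exact point_eq hc1 hs1 hag1 hc2 hs2 hag2 hx (hsig x hx)
    exact Subtype.ext this
  have hle : S.ncard ≤ Fintype.card (Fin (#Aᶜ - 1) ↪ {x : Fin κ // x ∈ Aᶜ.erase b₀}) := by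
    rw [← Nat.card_coe_set_eq, ← Nat.card_eq_fintype_card]
    exact Nat.card_le_card_of_injective G hG
  have hcardE : Fintype.card (Fin (#Aᶜ - 1) ↪ {x : Fin κ // x ∈ Aᶜ.erase b₀})
      = Nat.factorial (κ - t - 1) := by
    rw [Fintype.card_embedding_eq, Fintype.card_fin, Fintype.card_coe,
      Finset.card_erase_of_mem hb₀c, hAcard, Nat.descFactorial_self]
  rw [hcardE] at hle
  exact hle
end
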